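/- Let K be the finite field with 4 elements and L the finite field with 256 elements, viewed as a K-algebra (the degree-4 extension of K). Then there exist K-linear forms x_1^*, …, x_10^*, y_1^*, …, y_10^* : L → K and elements c_1, …, c_10 ∈ L such that for all x, y ∈ L, x·y = Σ_{i=1}^{10} x_i^*(x) y_i^*(y) c_i. In particular, the bilinear complexity of multiplication in F_{4^4} over F_4 is at most 10. -/

import Mathlib

private lemma kar_aux {K L : Type*} [CommRing K] [CommRing L] [Algebra K L]
    (a0 a1 a2 a3 b0 b1 b2 b3 : K) (t : L) :
    (a0 • (1:L) + a1 • t + a2 • t^2 + a3 • t^3) *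
      (b0 • (1:L) + b1 • t + b2 • t^2 + b3 • t^3) =
      (a0*b0) • (1 - t - t^2 + t^3) +
      ((a1*b1) • (-t + t^2 + t^3 - t^4) +
      (((a0+a1)*(b0+b1)) • (t - t^3) +
      ((a2*b2) • (-t^2 + t^3 + t^4 - t^5) +
      ((a3*b3) • (t^3 - t^4 - t^5 + t^6) +
      (((a2+a3)*(b2+b3)) • (-t^3 + t^5) +
      (((a0+a2)*(b0+b2)) • (t^2 - t^3) +
      (((a1+a3)*(b1+b3)) • (-t^3 + t^4) +
      ((a0+a1+a2+a3)*(b0+b1+b2+b3)) • (t^3:L)))))))) := by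
  simp only [Algebra.smul_def, map_add, map_mul, map_one]
  ring

set_option maxHeartbeats 1600000 in
/-- Multiplication in `F_{4^4} = F_256` (modelled by `L`, the degree-4 extension of the
field `K` with 4 elements) admits a bilinear multiplication algorithm with 10 bilinear
multiplications; in particular the bilinear complexity of `F_{4^4}` over `F_4` is at
most 10. -/
theorem bilinear_mul_F4_4
    (K : Type*) [Field K] [Fintype K] (hK : Fintype.card K = 4)
    (L : Type*) [Field L] [Algebra K L] (hL : Module.finrank K L = 4) :
    ∃ (xs ys : Fin 10 → (L →ₗ[K] K)) (c : Fin 10 → L),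
      ∀ x y : L, x * y = ∑ i, (xs i x * ys i y) • c i := by
  haveI : FiniteDimensional K L := FiniteDimensional.of_finrank_eq_succ hL
  let pb : PowerBasis K L := Field.powerBasisOfFiniteOfSeparable K L
  have hdim : pb.dim = 4 := by rw [← pb.finrank, hL]
  set α : L := pb.gen with hα
  let B : Module.Basis (Fin 4) K L := pb.basis.reindex (finCongr hdim)
  have hB : ∀ i : Fin 4, B i = α ^ (i : ℕ) := by
    intro i
    simp [B, Module.Basis.reindex_apply, PowerBasis.coe_basis, hα]
  let f : Fin 4 → (L →ₗ[K] K) := fun i => B.coord i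
  have hrep : ∀ z : L, z = (f 0 z) • (1:L) + (f 1 z) • α + (f 2 z) • α^2 + (f 3 z) • α^3 := by
    intro z
    conv_lhs => rw [← B.sum_repr z]
    rw [Fin.sum_univ_four]
    simp only [f, hB, Module.Basis.coord_apply]
    norm_num
  refine ⟨![f 0, f 1, f 0 + f 1, f 2, f 3, f 2 + f 3, f 0 + f 2, f 1 + f 3,
            f 0 + f 1 + f 2 + f 3, 0],
          ![f 0, f 1, f 0 + f 1, f 2, f 3, f 2 + f 3, f 0 + f 2, f 1 + f 3,
            f 0 + f 1 + f 2 + f 3, 0],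
          ![1 - α - α^2 + α^3,
            -α + α^2 + α^3 - α^4,
            α - α^3,
            -α^2 + α^3 + α^4 - α^5,
            α^3 - α^4 - α^5 + α^6,
            -α^3 + α^5,
            α^2 - α^3,
            -α^3 + α^4,
            α^3,
            0], ?_⟩
  intro x y
  conv_lhs => rw [hrep x, hrep y,
    kar_aux (f 0 x) (f 1 x) (f 2 x) (f 3 x) (f 0 y) (f 1 y) (f 2 y) (f 3 y) α]
  simp only [Fin.sum_univ_succ, Fin.sum_univ_zero, Matrix.cons_val_zero, Matrix.cons_val_succ,
    LinearMap.add_apply, LinearMap.zero_apply, add_zero, zero_mul, zero_smul, mul_zero]
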